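/- Let α : ℝ → ℝ be monotone (nondecreasing), σ > 0, S₋ ≤ 0 ≤ S₊, and assume the increment bounds α(r) − α(s) ≥ 2σ(r − s) whenever S₊ ≤ s ≤ r and whenever s ≤ r ≤ S₋. Let ν > 0 satisfy ν·α(S₊) ≤ S₊ and ν·α(S₋) ≥ S₋, and let j : ℝ → ℝ be a resolvent of α at parameter ν, with associated Yosida approximation α_ν. Then for all s ≤ r with either 2S₊ ≤ s or r ≤ 2S₋, one has α_ν(r) − α_ν(s) ≥ (2σ/(1 + 2νσ))·(r − s). In particular, if moreover 2νσ ≤ 1, then α_ν(r) − α_ν(s) ≥ σ·(r − s) on these ranges. -/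
import Mathlib


/-- Lemma 3.1 of the paper (incremental, single-valued form): the Yosida
approximation `α_ν(r) = (r - j(r))/ν` of a monotone function `α`, built from a
resolvent `j` (i.e. `j r + ν * α (j r) = r`), inherits the strong monotonicity
of `α` outside the enlarged interval `[2S₋, 2S₊]`, provided the smallness
conditions `ν·α(S₊) ≤ S₊` and `ν·α(S₋) ≥ S₋` hold. -/
theorem stmt_2 (α j : ℝ → ℝ) (hα : Monotone α) (σ Sm Sp ν : ℝ)
    (hσ : 0 < σ) (hν : 0 < ν) (hSm : Sm ≤ 0) (hSp : 0 ≤ Sp)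
    (hincup : ∀ s r : ℝ, Sp ≤ s → s ≤ r → α r - α s ≥ 2 * σ * (r - s))
    (hincdown : ∀ s r : ℝ, s ≤ r → r ≤ Sm → α r - α s ≥ 2 * σ * (r - s))
    (hsmallp : ν * α Sp ≤ Sp) (hsmallm : Sm ≤ ν * α Sm)
    (hres : ∀ r : ℝ, j r + ν * α (j r) = r) :
    ∀ s r : ℝ, s ≤ r → (2 * Sp ≤ s ∨ r ≤ 2 * Sm) →
      ((r - j r) / ν - (s - j s) / ν ≥ 2 * σ / (1 + 2 * ν * σ) * (r - s)) ∧
      (2 * ν * σ ≤ 1 → (r - j r) / ν - (s - j s) / ν ≥ σ * (r - s)) := by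
  intro s r hsr hcase
  have hjmono : j s ≤ j r := by
    by_contra h
    push_neg at h
    have hαle := hα h.le
    have h1 := hres r
    have h2 := hres s
    nlinarith
  have key : α (j r) - α (j s) ≥ 2 * σ * (j r - j s) := by
    rcases hcase with hp | hm
    · have hjs : Sp ≤ j s := by
        by_contra h
        push_neg at h
        have hαle := hα h.le
        have h2 := hres s
        nlinarith
      exact hincup _ _ hjs hjmono
    · have hjr : j r ≤ Sm := by
        by_contra h
        push_neg at h
        have hαle := hα h.le
        have h1 := hres r
        nlinarith
      exact hincdown _ _ hjmono hjr
  have e1 : (r - j r) / ν = α (j r) := by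
    have := hres r; field_simp; linarith
  have e2 : (s - j s) / ν = α (j s) := by
    have := hres s; field_simp; linarith
  have hpos : (0:ℝ) < 1 + 2 * ν * σ := by positivity
  have main : (r - j r) / ν - (s - j s) / ν ≥ 2 * σ / (1 + 2 * ν * σ) * (r - s) := by
    rw [e1, e2, ge_iff_le, div_mul_eq_mul_div, div_le_iff₀ hpos]
    have h1 := hres r
    have h2 := hres s
    nlinarith
  refine ⟨main, fun hle => ?_⟩
  have hfac : σ ≤ 2 * σ / (1 + 2 * ν * σ) := by
    rw [le_div_iff₀ hpos]; nlinarith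
  have : σ * (r - s) ≤ 2 * σ / (1 + 2 * ν * σ) * (r - s) := by
    apply mul_le_mul_of_nonneg_right hfac (by linarith)
  linarith
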